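/- Let α, β, γ, μ, ν be an admissible solution of System B on [0,∞) with β ≡ γ. Then there exists t₀ ≥ 0 such that either α(t) > 4β(t) for all t > t₀, or α(t) < 4β(t) for all t > t₀. -/

import Mathlib

open Topology Filter


/-- **System B**: the homogeneous Ricci flow equations on `SL(2,ℂ)/U(1)` for
real-valued differentiable functions `α β γ μ ν` on a set `s`, with `τ := μ² + ν²`,
together with the admissibility conditions `α > 0`, `β > 0`, `γ > 0`, `βγ > τ`. -/
def IsAdmissibleSolutionB (α β γ μ ν : ℝ → ℝ) (s : Set ℝ) : Prop :=
  ∀ t ∈ s,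
    0 < α t ∧ 0 < β t ∧ 0 < γ t ∧
    μ t ^ 2 + ν t ^ 2 < β t * γ t ∧
    HasDerivWithinAt α
      (2 * (16 * β t * γ t - α t ^ 2) / (β t * γ t - (μ t ^ 2 + ν t ^ 2))) s t ∧
    HasDerivWithinAt β
      (-(β t * (16 * (μ t ^ 2 + ν t ^ 2) - α t ^ 2)) /
        (α t * (β t * γ t - (μ t ^ 2 + ν t ^ 2)))) s t ∧
    HasDerivWithinAt γ
      (-(γ t * (16 * (μ t ^ 2 + ν t ^ 2) - α t ^ 2)) /
        (α t * (β t * γ t - (μ t ^ 2 + ν t ^ 2)))) s t ∧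
    HasDerivWithinAt μ
      (8 - μ t * (16 * β t * γ t - α t ^ 2) /
        (α t * (β t * γ t - (μ t ^ 2 + ν t ^ 2)))) s t ∧
    HasDerivWithinAt ν
      (-(ν t * (16 * β t * γ t - α t ^ 2)) /
        (α t * (β t * γ t - (μ t ^ 2 + ν t ^ 2)))) s t

/-- For an admissible solution of System B on `[0,∞)` with `β ≡ γ`, there is a time
`t₀ ≥ 0` after which either `α > 4β` always, or `α < 4β` always. -/
theorem systemB_eventual_sign_alpha_sub_four_beta (α β γ μ ν : ℝ → ℝ)
    (h : IsAdmissibleSolutionB α β γ μ ν (Set.Ici 0))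
    (hβγ : ∀ t ∈ Set.Ici (0 : ℝ), β t = γ t) :
    ∃ t₀ : ℝ, 0 ≤ t₀ ∧
      ((∀ t > t₀, 4 * β t < α t) ∨ (∀ t > t₀, α t < 4 * β t)) := by
  classical
  set f : ℝ → ℝ := fun t => α t - 4 * β t with hfdef
  -- continuity of f on [0,∞)
  have hcont : ContinuousOn f (Set.Ici 0) := by
    intro t ht
    obtain ⟨hα0, hβ0, hγ0, hτ, hα', hβ', -, -, -⟩ := h t ht
    exact (hα'.sub (hβ'.const_mul 4)).continuousWithinAt
  -- at any zero of f, the derivative of f is -16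
  have hderiv : ∀ t ∈ Set.Ici (0:ℝ), f t = 0 →
      HasDerivWithinAt f (-16) (Set.Ici 0) t := by
    intro t ht hft
    obtain ⟨hα0, hβ0, hγ0, hτ, hα', hβ', -, -, -⟩ := h t ht
    have hbg : β t = γ t := hβγ t ht
    have hα4 : α t = 4 * β t := by
      have := sub_eq_zero.mp hft
      linarith [this]
    have hD : β t * γ t - (μ t ^ 2 + ν t ^ 2) ≠ 0 := by nlinarith
    have hαne : α t ≠ 0 := ne_of_gt hα0
    have hcomb := hα'.sub (hβ'.const_mul 4)
    refine HasDerivWithinAt.congr_deriv hcomb ?_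
    rw [← hbg, hα4] at *
    rw [mul_div_assoc', div_sub_div _ _ hD (mul_ne_zero hαne hD),
      div_eq_iff (mul_ne_zero hD (mul_ne_zero hαne hD))]
    ring
  -- key monotone-sign lemma: once f is negative, it stays negative
  have key : ∀ a b : ℝ, 0 ≤ a → a < b → f a < 0 → f b < 0 := by
    intro a b ha hab hfa
    by_contra hfb
    push_neg at hfb
    set S : Set ℝ := {x ∈ Set.Icc a b | 0 ≤ f x} with hSdef
    have hS_ne : S.Nonempty := ⟨b, ⟨le_of_lt hab, le_refl b⟩, hfb⟩
    have hbdd : BddBelow S := ⟨a, fun x hx => hx.1.1⟩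
    have hIccsub : Set.Icc a b ⊆ Set.Ici 0 := fun x hx => le_trans ha hx.1
    have hS_closed : IsClosed S :=
      (hcont.mono hIccsub).preimage_isClosed_of_isClosed isClosed_Icc isClosed_Ici
    set s := sInf S with hs
    have hsS : s ∈ S := hS_closed.csInf_mem hS_ne hbdd
    obtain ⟨⟨has, hsb⟩, hfs0⟩ := hsS
    have hane : a ≠ s := by
      intro hh; rw [← hh] at hfs0; linarith
    have haslt : a < s := lt_of_le_of_ne has hane
    have hneg : ∀ x ∈ Set.Ico a s, f x < 0 := by
      intro x hx
      by_contra hge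
      push_neg at hge
      have hxS : x ∈ S := ⟨⟨hx.1, le_trans (le_of_lt hx.2) hsb⟩, hge⟩
      exact absurd (csInf_le hbdd hxS) (not_le.mpr hx.2)
    -- f s = 0 by continuity from the left
    have hNB : (𝓝[Set.Ico a s] s).NeBot := by
      rw [nhdsWithin_Ico_eq_nhdsLT haslt]
      infer_instance
    have hfs_le : f s ≤ 0 := by
      have hcw : ContinuousWithinAt f (Set.Ico a s) s :=
        (hcont s (le_trans ha has)).mono (fun x hx => le_trans ha hx.1)
      have : ∀ᶠ x in 𝓝[Set.Ico a s] s, f x ≤ 0 :=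
        eventually_nhdsWithin_of_forall (fun x hx => le_of_lt (hneg x hx))
      exact le_of_tendsto hcw this
    have hfs : f s = 0 := le_antisymm hfs_le hfs0
    -- derivative of f at s within Ico a s is -16
    have hd : HasDerivWithinAt f (-16) (Set.Ico a s) s :=
      (hderiv s (le_trans ha has) hfs).mono (fun x hx => le_trans ha hx.1)
    rw [hasDerivWithinAt_iff_tendsto_slope] at hd
    have hdiff : Set.Ico a s \ {s} = Set.Ico a s := by
      apply Set.diff_singleton_eq_self
      intro hh; exact absurd hh.2 (lt_irrefl s)
    rw [hdiff] at hd
    have hslope : ∀ᶠ x in 𝓝[Set.Ico a s] s, 0 ≤ slope f s x := by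
      refine eventually_nhdsWithin_of_forall (fun x hx => ?_)
      have hxlt : x < s := hx.2
      have hfx : f x < 0 := hneg x hx
      rw [slope_def_field]
      have : f x - f s < 0 := by rw [hfs]; linarith
      have hxs : x - s < 0 := by linarith
      rw [div_nonneg_iff]
      right
      constructor
      · simp only [hfs]; linarith
      · linarith
    have : (0:ℝ) ≤ -16 := ge_of_tendsto hd hslope
    linarith
  by_cases hz : ∃ t₁ ∈ Set.Ici (0:ℝ), f t₁ = 0
  · obtain ⟨t₁, ht₁, hft₁⟩ := hz
    refine ⟨t₁, ht₁, Or.inr ?_⟩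
    intro t ht
    -- f becomes negative immediately after t₁
    have hd : HasDerivWithinAt f (-16) (Set.Ioi t₁) t₁ :=
      (hderiv t₁ ht₁ hft₁).mono (fun x hx => Set.mem_Ici.mpr (le_trans ht₁ (le_of_lt hx)))
    rw [hasDerivWithinAt_iff_tendsto_slope] at hd
    rw [Set.diff_singleton_eq_self (by simp : t₁ ∉ Set.Ioi t₁)] at hd
    have h1 : ∀ᶠ x in 𝓝[Set.Ioi t₁] t₁, slope f t₁ x < 0 :=
      hd.eventually (gt_mem_nhds (by norm_num : (-16:ℝ) < 0))
    have h2 : ∀ᶠ x in 𝓝[Set.Ioi t₁] t₁, x ∈ Set.Ioo t₁ t :=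
      Ioo_mem_nhdsGT_of_mem ⟨le_refl t₁, ht⟩
    obtain ⟨x, hx1, hx2⟩ := (h1.and h2).exists
    have hfx : f x < 0 := by
      rw [slope_def_field] at hx1
      have hxt : 0 < x - t₁ := by linarith [hx2.1]
      have := (div_neg_iff).mp hx1
      rcases this with ⟨h3, h4⟩ | ⟨h3, h4⟩
      · rw [hft₁] at h3; linarith
      · linarith
    have : f t < 0 := key x t (le_trans ht₁ (le_of_lt hx2.1)) hx2.2 hfx
    simp only [hfdef] at this
    linarith
  · push_neg at hz
    refine ⟨0, le_refl 0, ?_⟩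
    rcases lt_trichotomy (f 0) 0 with hneg | h0 | hpos
    · refine Or.inr (fun t ht => ?_)
      have := key 0 t (le_refl 0) ht hneg
      simp only [hfdef] at this; linarith
    · exact absurd h0 (hz 0 (Set.mem_Ici.mpr (le_refl 0)))
    · refine Or.inl (fun t ht => ?_)
      by_contra hle
      push_neg at hle
      have hft : f t < 0 := by
        have := hz t (le_of_lt ht)
        have h' : f t ≤ 0 := by simp only [hfdef]; linarith
        exact lt_of_le_of_ne h' this
      have hivt := intermediate_value_Icc' (le_of_lt ht)
        (hcont.mono (fun x hx => hx.1))
      have h0mem : (0:ℝ) ∈ Set.Icc (f t) (f 0) := ⟨le_of_lt hft, le_of_lt hpos⟩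
      obtain ⟨x, hxmem, hfx⟩ := hivt h0mem
      exact hz x hxmem.1 hfx
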